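/- Let K be a number field of degree n in which a prime p is totally ramified, so (p) = 𝔭^n with N(𝔭) = p. Suppose p = a + b with 0 < a < p, a an n-th power residue modulo p, and suppose K is norm-Euclidean. Then at least one of a and −b is the norm of an element of O_K. -/
import Mathlib

open Polynomial Matrix NumberField

/-- A number field is norm-Euclidean if division with remainder holds with
respect to the absolute value of the field norm. -/
def NormEuclidean (K : Type*) [Field K] [NumberField K] : Prop :=
  ∀ α β : 𝓞 K, β ≠ 0 → ∃ γ ρ : 𝓞 K, α = γ * β + ρ ∧
    |Algebra.norm ℤ ρ| < |Algebra.norm ℤ β|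

lemma det_smul_one_add_nilpotent {F : Type*} [Field F] {ι : Type*} [Fintype ι] [DecidableEq ι]
    (c : F) {D : Matrix ι ι F} (hD : IsNilpotent D) :
    (c • (1 : Matrix ι ι F) + D).det = c ^ Fintype.card ι := by
  have h1 : IsNilpotent (-D) := hD.neg
  have hcp : (-D).charpoly = X ^ Fintype.card ι := by
    have h2 := Matrix.isNilpotent_charpoly_sub_pow_of_isNilpotent h1
    have h3 : (-D).charpoly - X ^ Fintype.card ι = 0 := h2.eq_zero
    linear_combination h3
  have heval : ((-D).charpoly).eval c = (c • (1 : Matrix ι ι F) + D).det := by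
    rw [Matrix.charpoly, ← coe_evalRingHom, RingHom.map_det]
    congr 1
    ext i j
    rcases eq_or_ne i j with rfl | hij
    · simp [charmatrix_apply_eq]
    · simp [charmatrix_apply_ne _ _ _ hij, Matrix.one_apply_ne hij]
  rw [hcp] at heval
  simpa using heval.symm

lemma norm_cast_key (K : Type*) [Field K] [NumberField K] (p : ℕ) [Fact p.Prime]
    (x : ℤ) (ρ δ : 𝓞 K) (hδ : ρ = (x : 𝓞 K) + δ)
    (hnil : ∃ m : ℕ, ∃ τ : 𝓞 K, δ ^ m = (p : 𝓞 K) * τ) :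
    ((Algebra.norm ℤ ρ : ℤ) : ZMod p) = (x : ZMod p) ^ (Module.finrank ℤ (𝓞 K)) := by
  classical
  let b := Module.Free.chooseBasis ℤ (𝓞 K)
  set ι := Module.Free.ChooseBasisIndex ℤ (𝓞 K)
  have hcard : Fintype.card ι = Module.finrank ℤ (𝓞 K) :=
    (Module.finrank_eq_card_chooseBasisIndex ℤ (𝓞 K)).symm
  have hnorm : Algebra.norm ℤ ρ = (Algebra.leftMulMatrix b ρ).det :=
    Algebra.norm_eq_matrix_det b ρ
  set f : ℤ →+* ZMod p := Int.castRingHom (ZMod p)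
  set F : Matrix ι ι ℤ →+* Matrix ι ι (ZMod p) := f.mapMatrix
  have hdet : ((Algebra.norm ℤ ρ : ℤ) : ZMod p) = (F (Algebra.leftMulMatrix b ρ)).det := by
    rw [hnorm]
    exact (RingHom.map_det f _)
  set D : Matrix ι ι (ZMod p) := F (Algebra.leftMulMatrix b δ) with hD
  have hnilD : IsNilpotent D := by
    obtain ⟨m, τ, hm⟩ := hnil
    refine ⟨m, ?_⟩
    rw [hD, ← map_pow, ← map_pow, hm, _root_.map_mul, _root_.map_mul]
    have h1 : (Algebra.leftMulMatrix b) ((p : ℕ) : 𝓞 K) = ((p : ℕ) : Matrix ι ι ℤ) :=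
      map_natCast (Algebra.leftMulMatrix b) p
    rw [h1]
    have h2 : F ((p : ℕ) : Matrix ι ι ℤ) = ((p : ℕ) : Matrix ι ι (ZMod p)) := map_natCast F p
    rw [h2]
    simp [ZMod.natCast_self]
  have hsplit : F (Algebra.leftMulMatrix b ρ) = ((x : ZMod p)) • (1 : Matrix ι ι (ZMod p)) + D := by
    rw [hδ, map_add, map_add]
    congr 1
    rw [map_intCast (Algebra.leftMulMatrix b) x, map_intCast F x]
    rw [← Matrix.diagonal_intCast]
    ext i j
    rcases eq_or_ne i j with rfl | hij
    · simp
    · simp [Matrix.one_apply_ne hij, Matrix.diagonal_apply_ne _ hij]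
  rw [hdet, hsplit, det_smul_one_add_nilpotent _ hnilD, hcard]

theorem heilbronn_criterion (K : Type*) [Field K] [NumberField K]
    (n : ℕ) (hn : n = Module.finrank ℚ K)
    (p : ℕ) (hp : p.Prime) (𝔭 : Ideal (𝓞 K)) (h𝔭 : 𝔭.IsPrime)
    (hram : Ideal.span {(p : 𝓞 K)} = 𝔭 ^ n) (hnorm : Ideal.absNorm 𝔭 = p)
    (a b : ℤ) (hab : (p : ℤ) = a + b) (ha0 : 0 < a) (hap : a < (p : ℤ))
    (hres : ∃ x : ℤ, ((x : ZMod p)) ^ n = (a : ZMod p))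
    (heuc : NormEuclidean K) :
    (∃ α : 𝓞 K, Algebra.norm ℤ α = a) ∨ (∃ α : 𝓞 K, Algebra.norm ℤ α = -b) := by
  haveI : Fact p.Prime := ⟨hp⟩
  have hn1 : 0 < n := by rw [hn]; exact Module.finrank_pos
  have hpK : ((p : ℕ) : 𝓞 K) ≠ 0 := Nat.cast_ne_zero.mpr hp.pos.ne'
  have h𝔭ne : 𝔭 ≠ ⊥ := by
    intro h
    rw [h] at hram
    rw [← Ideal.zero_eq_bot, zero_pow hn1.ne'] at hram
    exact hpK (Ideal.span_singleton_eq_bot.mp (hram.trans Ideal.zero_eq_bot))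
  -- pick an element of 𝔭 of minimal nonzero norm
  set S : Set ℕ := {k : ℕ | ∃ π : 𝓞 K, π ∈ 𝔭 ∧ π ≠ 0 ∧ (Algebra.norm ℤ π).natAbs = k} with hS
  have hSne : S.Nonempty := by
    obtain ⟨y, hy, hy0⟩ := Submodule.exists_mem_ne_zero_of_ne_bot h𝔭ne
    exact ⟨_, y, hy, hy0, rfl⟩
  obtain ⟨π, hπ𝔭, hπ0, hπmin⟩ := Nat.sInf_mem hSne
  -- 𝔭 is generated by π
  have hgen : 𝔭 = Ideal.span {π} := by
    refine le_antisymm (fun α hα => ?_) ((Ideal.span_singleton_le_iff_mem _).mpr hπ𝔭)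
    obtain ⟨γ, ρ, he, hlt⟩ := heuc α π hπ0
    by_cases hρ : ρ = 0
    · rw [hρ, add_zero] at he
      exact Ideal.mem_span_singleton.mpr ⟨γ, by rw [he, mul_comm]⟩
    · exfalso
      have hρ𝔭 : ρ ∈ 𝔭 := by
        have : ρ = α - γ * π := by rw [he]; ring
        rw [this]
        exact Ideal.sub_mem _ hα (Ideal.mul_mem_left _ _ hπ𝔭)
      have hle : sInf S ≤ (Algebra.norm ℤ ρ).natAbs := Nat.sInf_le ⟨ρ, hρ𝔭, hρ, rfl⟩
      rw [← hπmin] at hle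
      have : ((Algebra.norm ℤ ρ).natAbs : ℤ) < ((Algebra.norm ℤ π).natAbs : ℤ) := by
        rwa [← Int.abs_eq_natAbs, ← Int.abs_eq_natAbs]
      omega
  -- |N π| = p
  have hassoc : Associated ((p : ℕ) : 𝓞 K) (π ^ n) := by
    apply Ideal.span_singleton_eq_span_singleton.mp
    rw [← Ideal.span_singleton_pow, ← hgen, hram]
  obtain ⟨u, hu⟩ := hassoc
  have hNp : Algebra.norm ℤ ((p : ℕ) : 𝓞 K) = (p : ℤ) ^ n := by
    have h1 : ((p : ℕ) : 𝓞 K) = algebraMap ℤ (𝓞 K) (p : ℤ) := by push_cast; rfl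
    rw [h1, Algebra.norm_algebraMap_of_basis (Module.Free.chooseBasis ℤ (𝓞 K)),
      ← Module.finrank_eq_card_chooseBasisIndex, RingOfIntegers.rank, ← hn]
  have hNu : IsUnit (Algebra.norm ℤ (u : 𝓞 K)) := u.isUnit.map (Algebra.norm ℤ)
  have hNπ : (Algebra.norm ℤ π).natAbs = p := by
    have h1 : Algebra.norm ℤ ((p : ℕ) : 𝓞 K) * Algebra.norm ℤ (u : 𝓞 K) =
        (Algebra.norm ℤ π) ^ n := by
      rw [← _root_.map_mul, hu, map_pow]
    have h2 : (Algebra.norm ℤ (u : 𝓞 K)).natAbs = 1 := Int.isUnit_iff.mp hNu |>.elim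
      (fun h => by rw [h]; rfl) (fun h => by rw [h]; rfl)
    have h3 : p ^ n = (Algebra.norm ℤ π).natAbs ^ n := by
      have := congrArg Int.natAbs h1
      rwa [Int.natAbs_mul, hNp, Int.natAbs_pow, Int.natAbs_pow, h2, mul_one,
        Int.natAbs_natCast] at this
    exact (Nat.pow_left_injective hn1.ne' h3.symm)
  -- apply the Euclidean property to x and π
  obtain ⟨x, hx⟩ := hres
  obtain ⟨γ, ρ, he, hlt⟩ := heuc (x : 𝓞 K) π hπ0
  have habs : |Algebra.norm ℤ ρ| < (p : ℤ) := by
    have : |Algebra.norm ℤ π| = (p : ℤ) := by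
      rw [Int.abs_eq_natAbs, hNπ]
    rwa [this] at hlt
  -- congruence
  have hδ : ρ = (x : 𝓞 K) + (-(γ * π)) := by rw [he]; ring
  have hnil : ∃ m : ℕ, ∃ τ : 𝓞 K, (-(γ * π)) ^ m = ((p : ℕ) : 𝓞 K) * τ := by
    refine ⟨n, ?_⟩
    have hmem : (-(γ * π)) ^ n ∈ 𝔭 ^ n :=
      Ideal.pow_mem_pow (neg_mem (Ideal.mul_mem_left _ _ hπ𝔭)) n
    rw [← hram] at hmem
    exact Ideal.mem_span_singleton.mp hmem
  have key := norm_cast_key K p x ρ _ hδ hnil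
  rw [RingOfIntegers.rank, ← hn, hx] at key
  have hdvd : ((p : ℕ) : ℤ) ∣ (Algebra.norm ℤ ρ - a) := by
    apply (ZMod.intCast_zmod_eq_zero_iff_dvd _ _).mp
    push_cast
    rw [key]
    ring
  obtain ⟨k, hk⟩ := hdvd
  have hp0 : (0 : ℤ) < (p : ℤ) := by exact_mod_cast hp.pos
  have hk1 : k < 1 := by
    have h1 : (p : ℤ) * k < (p : ℤ) * 1 := by
      rw [← hk, mul_one]
      have := abs_lt.mp habs
      omega
    exact lt_of_mul_lt_mul_left h1 hp0.le
  have hk2 : -2 < k := by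
    have h1 : (p : ℤ) * (-2) < (p : ℤ) * k := by
      rw [← hk]
      have := abs_lt.mp habs
      omega
    exact lt_of_mul_lt_mul_left h1 hp0.le
  interval_cases k
  · right
    refine ⟨ρ, ?_⟩
    have : Algebra.norm ℤ ρ - a = -(p : ℤ) := by rw [hk]; ring
    omega
  · left
    refine ⟨ρ, ?_⟩
    have : Algebra.norm ℤ ρ - a = 0 := by rw [hk]; ring
    omega
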